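/- Let A, B, and α be real numbers and define f : ℝ → ℝ by f(z) = (Az+B)^{−1} on the open set {z : Az+B ≠ 0}. Then f satisfies α·f²·f''' + (4−α)·f·f'·f'' − 4·(2+α)·(f')³ = 0 at every point where Az+B ≠ 0. -/

import Mathlib

private lemma keyc (A B c : ℝ) (n : ℤ) (z : ℝ) (hz : A * z + B ≠ 0) :
    HasDerivAt (fun w => c * (A * w + B) ^ n) (c * n * A * (A * z + B) ^ (n - 1)) z := by
  have hu : HasDerivAt (fun w : ℝ => A * w + B) A z := by
    simpa using ((hasDerivAt_id z).const_mul A).add_const B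
  have h := (((hasDerivAt_zpow n (A * z + B) (Or.inl hz)).comp z hu).const_mul c)
  have e : c * (↑n * (A * z + B) ^ (n - 1) * A) = c * n * A * (A * z + B) ^ (n - 1) := by ring
  exact e ▸ h

/-- the function `f(z) = (Az+B)^{−1}` satisfies
`α·f²·f''' + (4−α)·f·f'·f'' − 4·(2+α)·(f')³ = 0` at every point where `Az+B ≠ 0`. -/
theorem stmt_11 (A B α : ℝ) (f : ℝ → ℝ)
    (hf : ∀ z, A * z + B ≠ 0 → f z = (A * z + B)⁻¹) :
    ∀ z, A * z + B ≠ 0 →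
      α * (f z) ^ 2 * deriv (deriv (deriv f)) z
        + (4 - α) * f z * deriv f z * deriv (deriv f) z
        - 4 * (2 + α) * (deriv f z) ^ 3 = 0 := by
  intro z hz
  have hopen : IsOpen {w : ℝ | A * w + B ≠ 0} := by
    have : Continuous fun w : ℝ => A * w + B := by continuity
    exact isOpen_ne.preimage this
  have hmem : {w : ℝ | A * w + B ≠ 0} ∈ nhds z := hopen.mem_nhds hz
  have c1 : ((-1 : ℤ) - 1) = -2 := by norm_num
  have c2 : ((-2 : ℤ) - 1) = -3 := by norm_num
  have c3 : ((-3 : ℤ) - 1) = -4 := by norm_num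
  have e0 : f =ᶠ[nhds z] fun w => (1 : ℝ) * (A * w + B) ^ (-1 : ℤ) := by
    filter_upwards [hmem] with w hw
    rw [hf w hw, one_mul, zpow_neg, zpow_one]
  have e1 : deriv f =ᶠ[nhds z] fun w => (-A) * (A * w + B) ^ (-2 : ℤ) := by
    refine e0.deriv.trans ?_
    filter_upwards [hmem] with w hw
    rw [(keyc A B 1 (-1) w hw).deriv, c1]
    push_cast
    ring
  have e2 : deriv (deriv f) =ᶠ[nhds z] fun w => (2 * A ^ 2) * (A * w + B) ^ (-3 : ℤ) := by
    refine e1.deriv.trans ?_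
    filter_upwards [hmem] with w hw
    rw [(keyc A B (-A) (-2) w hw).deriv, c2]
    push_cast
    ring
  have e3 : deriv (deriv (deriv f)) z = (-6 * A ^ 3) * (A * z + B) ^ (-4 : ℤ) := by
    rw [e2.deriv.self_of_nhds, (keyc A B (2 * A ^ 2) (-3) z hz).deriv, c3]
    push_cast
    ring
  rw [e0.self_of_nhds, e1.self_of_nhds, e2.self_of_nhds, e3]
  simp only [zpow_neg, zpow_one, zpow_ofNat]
  field_simp
  ring
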